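/- For all real numbers a, b, c, it holds that ∫_{−∞}^{c} Φ(a + b·x)·φ(x) dx = Φ₂(c, a/√(1+b²); −b/√(1+b²)). -/

import Mathlib

open MeasureTheory

/-- The standard normal density `φ(x) = (2π)^{-1/2} e^{-x²/2}`. -/
noncomputable def stdGaussianPDF (x : ℝ) : ℝ :=
  (Real.sqrt (2 * Real.pi))⁻¹ * Real.exp (-x ^ 2 / 2)

/-- The standard normal cumulative distribution function `Φ`. -/
noncomputable def stdGaussianCDF (x : ℝ) : ℝ :=
  ∫ z in Set.Iio x, stdGaussianPDF z

/-- The standard bivariate normal cumulative distribution function `Φ₂(x, y; ρ)`. -/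
noncomputable def biGaussianCDF (x y ρ : ℝ) : ℝ :=
  (2 * Real.pi * Real.sqrt (1 - ρ ^ 2))⁻¹ *
    ∫ u in Set.Iio x, ∫ v in Set.Iio y,
      Real.exp (-(u ^ 2 + v ^ 2 - 2 * ρ * u * v) / (2 * (1 - ρ ^ 2)))

lemma affine_Iio (g : ℝ → ℝ) (t k : ℝ) {s : ℝ} (hs : 0 < s) :
    ∫ v in Set.Iio t, g (s * v + k) = s⁻¹ * ∫ z in Set.Iio (s * t + k), g z := by
  rw [← integral_indicator measurableSet_Iio, ← integral_indicator measurableSet_Iio]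
  have key : ∀ v : ℝ, (Set.Iio t).indicator (fun v => g (s * v + k)) v
      = (Set.Iio (s * t + k)).indicator g (s * v + k) := by
    intro v
    have hiff : s * v + k < s * t + k ↔ v < t := by
      constructor
      · intro h
        exact (mul_lt_mul_iff_right₀ hs).1 (lt_of_add_lt_add_right h)
      · intro h
        exact add_lt_add_left ((mul_lt_mul_iff_right₀ hs).2 h) k
    simp only [Set.indicator_apply, Set.mem_Iio, hiff]
  simp_rw [key]
  set G := (Set.Iio (s * t + k)).indicator g with hG
  have step1 : ∫ v : ℝ, G (s * v + k) = |s⁻¹| • ∫ x : ℝ, G (x + k) :=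
    MeasureTheory.Measure.integral_comp_mul_left (fun x => G (x + k)) s
  rw [step1, integral_add_right_eq_self, abs_of_pos (inv_pos.2 hs), smul_eq_mul]

/-- `∫_{-∞}^c Φ(a + b x) φ(x) dx = Φ₂(c, a/√(1+b²); -b/√(1+b²))`. -/
theorem integral_cdf_mul_pdf (a b c : ℝ) :
    ∫ x in Set.Iio c, stdGaussianCDF (a + b * x) * stdGaussianPDF x
      = biGaussianCDF c (a / Real.sqrt (1 + b ^ 2)) (-b / Real.sqrt (1 + b ^ 2)) := by
  set s := Real.sqrt (1 + b ^ 2) with hsdef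
  have h1b : (0:ℝ) < 1 + b ^ 2 := by positivity
  have hs : 0 < s := Real.sqrt_pos.2 h1b
  have hs2 : s ^ 2 = 1 + b ^ 2 := Real.sq_sqrt h1b.le
  have hρ2 : 1 - (-b / s) ^ 2 = (s ^ 2)⁻¹ := by
    rw [div_pow, neg_pow, hs2]
    field_simp
    ring
  have hsq : Real.sqrt (1 - (-b / s) ^ 2) = s⁻¹ := by
    rw [hρ2, Real.sqrt_inv, Real.sqrt_sq hs.le]
  have h2π : (0:ℝ) ≤ 2 * Real.pi := by positivity
  have hroot : Real.sqrt (2 * Real.pi) * Real.sqrt (2 * Real.pi) = 2 * Real.pi :=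
    Real.mul_self_sqrt h2π
  rw [biGaussianCDF, hsq]
  have hpre : (2 * Real.pi * s⁻¹)⁻¹ = s * (2 * Real.pi)⁻¹ := by
    rw [mul_inv, inv_inv, mul_comm]
  rw [hpre, ← MeasureTheory.integral_const_mul (s * (2 * Real.pi)⁻¹)]
  refine setIntegral_congr_fun measurableSet_Iio (fun u _ => ?_)
  -- inner integrand rewrite: exponent equals -(u² + (s v + b u)²)/2
  have hexp : ∀ v : ℝ,
      Real.exp (-(u ^ 2 + v ^ 2 - 2 * (-b / s) * u * v) / (2 * (1 - (-b / s) ^ 2)))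
        = Real.exp (-(u ^ 2 + (s * v + b * u) ^ 2) / 2) := by
    intro v
    congr 1
    rw [hρ2]
    have h1 : -(u ^ 2 + v ^ 2 - 2 * (-b / s) * u * v) / (2 * (s ^ 2)⁻¹)
        = -(u ^ 2 + v ^ 2 + 2 * (b / s) * u * v) * s ^ 2 / 2 := by
      field_simp
      ring
    rw [h1]
    have hbs : b / s * s ^ 2 = b * s := by
      field_simp
    have e1 : -(u ^ 2 + v ^ 2 + 2 * (b / s) * u * v) * s ^ 2
        = -(u ^ 2 * s ^ 2 + v ^ 2 * s ^ 2 + 2 * (b / s * s ^ 2) * u * v) := by ring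
    have h2 : -(u ^ 2 + v ^ 2 + 2 * (b / s) * u * v) * s ^ 2
        = -(u ^ 2 + (s * v + b * u) ^ 2) := by
      rw [e1, hbs]
      linear_combination (-(u ^ 2)) * hs2
    rw [h2]
  simp_rw [hexp]
  have hsub := affine_Iio (fun z => Real.exp (-(u ^ 2 + z ^ 2) / 2)) (a / s) (b * u) hs
  have hst : s * (a / s) + b * u = a + b * u := by field_simp
  rw [hst] at hsub
  rw [hsub, ← mul_assoc]
  have hcancel : s * (2 * Real.pi)⁻¹ * s⁻¹ = (2 * Real.pi)⁻¹ := by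
    field_simp
  rw [hcancel]
  rw [stdGaussianCDF, stdGaussianPDF, ← integral_mul_const,
    ← MeasureTheory.integral_const_mul ((2 * Real.pi)⁻¹)]
  refine setIntegral_congr_fun measurableSet_Iio (fun z _ => ?_)
  simp only [stdGaussianPDF]
  have hsplit : Real.exp (-(u ^ 2 + z ^ 2) / 2)
      = Real.exp (-z ^ 2 / 2) * Real.exp (-u ^ 2 / 2) := by
    rw [← Real.exp_add]; congr 1; ring
  have hinv : (2 * Real.pi)⁻¹ = (Real.sqrt (2 * Real.pi))⁻¹ * (Real.sqrt (2 * Real.pi))⁻¹ := by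
    rw [← mul_inv, hroot]
  rw [hsplit, hinv]
  ring
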